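/- arXiv:1707.05158 — 4 statements merged into one kernel-verified Lean document; each statement's English description precedes it below -/
import Mathlib

section
/- Let n ≥ 2, let i ≠ j be indices in {1,…,n}, and let u = Σ_{σ ∈ Sₙ} c_σ · e_{σ(1)} ⊗ ⋯ ⊗ e_{σ(n)} ∈ (ℂⁿ)^{⊗n}, where c : Sₙ → ℂ. If (R_{ij}(θ))^{⊗n} u = u for every θ ∈ ℝ, where R_{ij}(θ) is the n×n matrix equal to the identity except for entries (i,i) = cos θ, (i,j) = sin θ, (j,i) = −sin θ, (j,j) = cos θ, then the coefficients are antisymmetric under exchanging the values i and j: for every σ ∈ Sₙ, c_{(i j)∘σ} = −c_σ, where (i j) denotes the transposition of i and j. -/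
open scoped TensorProduct

/-- The `n×n` rotation matrix `R_{ij}(θ)`: the identity except in rows/columns `i,j`,
where it rotates by `θ`. -/
noncomputable def Rot (n : ℕ) (i j : Fin n) (θ : ℂ) : Matrix (Fin n) (Fin n) ℂ :=
  Matrix.of fun k l =>
    if k = i ∧ l = i then Complex.cos θ
    else if k = i ∧ l = j then Complex.sin θ
    else if k = j ∧ l = i then -Complex.sin θ
    else if k = j ∧ l = j then Complex.cos θ
    else if k = l then 1 else 0

/-- If `u = Σ_σ c_σ e_{σ(1)} ⊗ ⋯ ⊗ e_{σ(n)}` is invariant under `R_{ij}(θ)^{⊗n}` for all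
real `θ`, then the coefficients are antisymmetric under exchanging `i` and `j`. -/
theorem stmt4 (n : ℕ) (hn : 2 ≤ n) (i j : Fin n) (hij : i ≠ j)
    (c : Equiv.Perm (Fin n) → ℂ)
    (u : ⨂[ℂ] _ : Fin n, (Fin n → ℂ))
    (hu : u = ∑ σ : Equiv.Perm (Fin n),
      c σ • (PiTensorProduct.tprod ℂ fun k => (Pi.single (σ k) 1 : Fin n → ℂ)))
    (hinv : ∀ θ : ℝ,
      PiTensorProduct.map (fun _ : Fin n => Matrix.toLin' (Rot n i j (θ : ℂ))) u = u) :
    ∀ σ : Equiv.Perm (Fin n), c (Equiv.swap i j * σ) = -c σ := by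
  intro σ
  have hcos : Complex.cos ((Real.pi / 2 : ℝ) : ℂ) = 0 := by
    rw [← Complex.ofReal_cos, Real.cos_pi_div_two, Complex.ofReal_zero]
  have hsin : Complex.sin ((Real.pi / 2 : ℝ) : ℂ) = 1 := by
    rw [← Complex.ofReal_sin, Real.sin_pi_div_two, Complex.ofReal_one]
  have hrot : ∀ m : Fin n,
      Matrix.toLin' (Rot n i j ((Real.pi / 2 : ℝ) : ℂ)) (Pi.single m 1) =
      (if m = i then (-1 : ℂ) else 1) • (Pi.single (Equiv.swap i j m) 1 : Fin n → ℂ) := by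
    intro m
    funext k
    have h1 : Matrix.toLin' (Rot n i j ((Real.pi / 2 : ℝ) : ℂ)) (Pi.single m 1) k
        = Rot n i j ((Real.pi / 2 : ℝ) : ℂ) k m := by
      simp only [Matrix.toLin'_apply, Matrix.mulVec, dotProduct, Pi.single_apply,
        mul_ite, mul_one, mul_zero]
      rw [Finset.sum_ite_eq' Finset.univ m]
      simp
    rw [h1]
    simp only [Rot, Matrix.of_apply, Pi.smul_apply, Pi.single_apply, smul_eq_mul, hcos, hsin]
    rcases eq_or_ne m i with rfl | hmi
    · rw [Equiv.swap_apply_left]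
      rcases eq_or_ne k m with rfl | hk
      · simp [hij]
      · split_ifs <;> simp_all
    · rcases eq_or_ne m j with rfl | hmj
      · rw [Equiv.swap_apply_right]
        rcases eq_or_ne k i with rfl | hk
        · simp [hij, hmi]
        · split_ifs <;> simp_all
      · rw [Equiv.swap_apply_of_ne_of_ne hmi hmj]
        split_ifs <;> simp_all
  have key := hinv (Real.pi / 2)
  rw [hu, map_sum] at key
  simp only [LinearMap.map_smul, PiTensorProduct.map_tprod, hrot,
    MultilinearMap.map_smul_univ] at key
  have hprod : ∀ τ : Equiv.Perm (Fin n),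
      (∏ k, if τ k = i then (-1 : ℂ) else 1) = -1 := by
    intro τ
    rw [Equiv.prod_comp τ (fun m => if m = i then (-1 : ℂ) else 1),
      Finset.prod_ite_eq' Finset.univ i (fun _ => (-1 : ℂ))]
    simp
  simp only [hprod] at key
  -- the coefficient-extraction functional
  set φ : (⨂[ℂ] _ : Fin n, (Fin n → ℂ)) →ₗ[ℂ] ℂ :=
    PiTensorProduct.lift ((MultilinearMap.mkPiAlgebra ℂ (Fin n) ℂ).compLinearMap
      (fun k => LinearMap.proj (σ k))) with hφdef
  have hφ : ∀ τ : Equiv.Perm (Fin n),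
      φ (PiTensorProduct.tprod ℂ fun k => (Pi.single (τ k) 1 : Fin n → ℂ)) =
      if τ = σ then 1 else 0 := by
    intro τ
    rw [hφdef]
    rw [PiTensorProduct.lift.tprod]
    simp only [MultilinearMap.compLinearMap_apply, MultilinearMap.mkPiAlgebra_apply,
      LinearMap.proj_apply, Pi.single_apply]
    rcases eq_or_ne τ σ with rfl | hτ
    · simp
    · rw [if_neg hτ]
      obtain ⟨k, hk⟩ : ∃ k, τ k ≠ σ k := by
        by_contra h
        push_neg at h
        exact hτ (Equiv.ext h)
      exact Finset.prod_eq_zero (Finset.mem_univ k) (by rw [if_neg (fun h => hk h.symm)])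
  have hcoe : ∀ τ : Equiv.Perm (Fin n),
      (fun k => (Pi.single (Equiv.swap i j (τ k)) 1 : Fin n → ℂ)) =
      (fun k => (Pi.single ((Equiv.swap i j * τ) k) 1 : Fin n → ℂ)) := fun τ => rfl
  have key2 := congrArg φ key
  simp only [map_sum, map_smul, hcoe, hφ, smul_eq_mul, mul_ite, mul_one, mul_zero] at key2
  have hcond : ∀ τ : Equiv.Perm (Fin n), (Equiv.swap i j * τ = σ) ↔ τ = Equiv.swap i j * σ := by
    intro τ
    constructor
    · intro h; rw [← h, ← mul_assoc, Equiv.swap_mul_self, one_mul]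
    · intro h; rw [h, ← mul_assoc, Equiv.swap_mul_self, one_mul]
  simp only [hcond] at key2
  rw [Finset.sum_ite_eq' Finset.univ (Equiv.swap i j * σ), Finset.sum_ite_eq' Finset.univ σ] at key2
  simp only [Finset.mem_univ, if_true] at key2
  linear_combination -key2
end

section
/- Let n ≥ 1 and let v ∈ (ℂⁿ)^{⊗n}. If T^{⊗n} v = v for every linear map T : ℂⁿ → ℂⁿ with det T = 1 (i.e., for every T ∈ SL(n,ℂ)), then v is a scalar multiple of the antisymmetrization of the standard basis: there exists κ ∈ ℂ such that v = κ · A(e₁,…,eₙ). In other words, up to normalization the Fermi-Dirac state is the unique state invariant under the action of SL(n,ℂ). -/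
open scoped TensorProduct

/-- The antisymmetrization `A(v₁,…,vₙ) = Σ_{σ ∈ Sₙ} sgn(σ) • v_{σ(1)} ⊗ ⋯ ⊗ v_{σ(n)}`
in the `n`-fold tensor power of `ℂⁿ`. -/
noncomputable def antisym (n : ℕ) (v : Fin n → (Fin n → ℂ)) :
    ⨂[ℂ] _ : Fin n, (Fin n → ℂ) :=
  ∑ σ : Equiv.Perm (Fin n),
    ((Equiv.Perm.sign σ : ℤ) : ℂ) • (PiTensorProduct.tprod ℂ fun k => v (σ k))

namespace Stmt6Aux

variable {n : ℕ}

/-- The basis tensor `e_{f(1)} ⊗ ⋯ ⊗ e_{f(n)}`. -/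
noncomputable def bvec (f : Fin n → Fin n) : ⨂[ℂ] _ : Fin n, (Fin n → ℂ) :=
  PiTensorProduct.tprod ℂ fun k => (Pi.single (f k) 1 : Fin n → ℂ)

/-- The coordinate functional extracting the coefficient of `bvec f`. -/
noncomputable def coef (f : Fin n → Fin n) :
    (⨂[ℂ] _ : Fin n, (Fin n → ℂ)) →ₗ[ℂ] ℂ :=
  PiTensorProduct.lift ((MultilinearMap.mkPiAlgebra ℂ (Fin n) ℂ).compLinearMap
    (fun k => LinearMap.proj (f k)))

lemma coef_tprod (f : Fin n → Fin n) (x : Fin n → (Fin n → ℂ)) :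
    coef f (PiTensorProduct.tprod ℂ x) = ∏ k, x k (f k) := by
  simp [coef]

lemma coef_bvec (f g : Fin n → Fin n) :
    coef g (bvec f) = if f = g then 1 else 0 := by
  rw [bvec, coef_tprod]
  have : ∀ k, (Pi.single (f k) 1 : Fin n → ℂ) (g k) = if f k = g k then 1 else 0 := by
    intro k
    rw [Pi.single_apply]
    simp [eq_comm]
  simp_rw [this]
  rw [Fintype.prod_boole]
  congr 1
  simp [funext_iff]

lemma tprod_expand (x : Fin n → (Fin n → ℂ)) :
    (PiTensorProduct.tprod ℂ x : ⨂[ℂ] _ : Fin n, (Fin n → ℂ)) =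
      ∑ f : Fin n → Fin n, (∏ k, x k (f k)) • bvec f := by
  have h1 : x = fun k => ∑ j, x k j • (Pi.single j 1 : Fin n → ℂ) := by
    funext k
    simp_rw [← Pi.single_smul, smul_eq_mul, mul_one]
    rw [Finset.univ_sum_single]
  conv_lhs => rw [h1]
  rw [MultilinearMap.map_sum]
  refine Finset.sum_congr rfl fun f _ => ?_
  rw [MultilinearMap.map_smul_univ]
  rfl

lemma expand (v : ⨂[ℂ] _ : Fin n, (Fin n → ℂ)) :
    v = ∑ f : Fin n → Fin n, coef f v • bvec f := by
  induction v using PiTensorProduct.induction_on with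
  | smul_tprod r x =>
      have hc : ∀ f : Fin n → Fin n,
          coef f (r • PiTensorProduct.tprod ℂ x) = r * ∏ k, x k (f k) := by
        intro f; rw [map_smul, coef_tprod, smul_eq_mul]
      simp_rw [hc]
      rw [tprod_expand, Finset.smul_sum]
      refine Finset.sum_congr rfl fun f _ => ?_
      rw [mul_smul]
  | add x y hx hy =>
      conv_lhs => rw [hx, hy]
      simp [map_add, add_smul, Finset.sum_add_distrib]

/-- How coefficients transform under a "generalized permutation" operator. -/
lemma coef_map (T : (Fin n → ℂ) →ₗ[ℂ] (Fin n → ℂ)) (d : Fin n → ℂ) (ρ : Equiv.Perm (Fin n))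
    (hT : ∀ j, T (Pi.single j 1) = d j • (Pi.single (ρ j) 1 : Fin n → ℂ))
    (v : ⨂[ℂ] _ : Fin n, (Fin n → ℂ)) (g : Fin n → Fin n) :
    coef g (PiTensorProduct.map (fun _ : Fin n => T) v)
      = (∏ k, d (ρ.symm (g k))) * coef (fun k => ρ.symm (g k)) v := by
  have key : ∀ f : Fin n → Fin n,
      coef g (PiTensorProduct.map (fun _ : Fin n => T) (bvec f))
        = if f = (fun k => ρ.symm (g k)) then ∏ k, d (f k) else 0 := by
    intro f
    rw [bvec, PiTensorProduct.map_tprod]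
    simp_rw [hT]
    rw [MultilinearMap.map_smul_univ, map_smul]
    have hiff : ((fun k => ρ (f k)) = g) ↔ (f = fun k => ρ.symm (g k)) := by
      constructor
      · intro h; funext k
        have := congrFun h k; rw [← this]; simp
      · intro h; funext k
        have := congrFun h k; rw [this]; simp
    have hcb : coef g ((PiTensorProduct.tprod ℂ) fun i => (Pi.single (ρ (f i)) 1 : Fin n → ℂ))
        = if f = (fun k => ρ.symm (g k)) then 1 else 0 := by
      rw [show ((PiTensorProduct.tprod ℂ) fun i => (Pi.single (ρ (f i)) 1 : Fin n → ℂ))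
          = bvec (fun k => ρ (f k)) from rfl, coef_bvec]
      simp only [hiff]
    rw [hcb]
    simp [smul_eq_mul, mul_ite]
  conv_lhs => rw [expand v]
  rw [map_sum, map_sum]
  simp_rw [map_smul, key, smul_eq_mul]
  simp only [mul_ite, mul_zero]
  rw [Finset.sum_ite_eq' Finset.univ (fun k => ρ.symm (g k))
    (fun f => coef f v * ∏ k, d (f k))]
  simp [mul_comm]

/-- Coefficients at non-bijective indices vanish (using diagonal matrices of determinant 1). -/
lemma stepA (hn : 1 ≤ n) (v : ⨂[ℂ] _ : Fin n, (Fin n → ℂ))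
    (h : ∀ T : (Fin n → ℂ) →ₗ[ℂ] (Fin n → ℂ), LinearMap.det T = 1 →
      PiTensorProduct.map (fun _ : Fin n => T) v = v)
    (f : Fin n → Fin n) (hf : ¬ Function.Bijective f) : coef f v = 0 := by
  have hns : ¬ Function.Surjective f := fun hs => hf (Finite.surjective_iff_bijective.mp hs)
  rw [Function.Surjective] at hns
  push_neg at hns
  obtain ⟨i, hi⟩ := hns
  set t : Fin n → ℂ := fun j => if j = i then ((2:ℂ)^(n-1))⁻¹ else 2 with ht
  set T := Matrix.toLin' (Matrix.diagonal t) with hTdef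
  have hdet : LinearMap.det T = 1 := by
    rw [hTdef, LinearMap.det_toLin', Matrix.det_diagonal,
      ← Finset.mul_prod_erase Finset.univ t (Finset.mem_univ i)]
    have h1 : ∏ j ∈ Finset.univ.erase i, t j = 2 ^ (n-1) := by
      rw [Finset.prod_congr rfl (fun j hj => if_neg (Finset.ne_of_mem_erase hj)),
        Finset.prod_const, Finset.card_erase_of_mem (Finset.mem_univ i),
        Finset.card_univ, Fintype.card_fin]
    rw [h1, ht]
    simp only [if_pos rfl]
    exact inv_mul_cancel₀ (pow_ne_zero _ two_ne_zero)
  have hT : ∀ j, T (Pi.single j 1)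
      = t j • (Pi.single ((1 : Equiv.Perm (Fin n)) j) 1 : Fin n → ℂ) := by
    intro j
    rw [hTdef, Matrix.toLin'_apply, Matrix.diagonal_mulVec_single]
    funext r
    simp [Pi.single_apply]
  have key := coef_map T t 1 hT v f
  rw [h T hdet] at key
  simp only [Equiv.Perm.one_symm, Equiv.Perm.coe_one, id] at key
  have hprod : ∏ k, t (f k) = 2 ^ n := by
    rw [Finset.prod_congr rfl (fun k _ => if_neg (hi k)), Finset.prod_const,
      Finset.card_univ, Fintype.card_fin]
  rw [hprod] at key
  have h2 : (2:ℂ)^n ≠ 1 := by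
    have hR : (2:ℝ)^n ≠ 1 := ne_of_gt (one_lt_pow₀ one_lt_two (by omega))
    intro hh
    apply hR
    have : (((2:ℝ)^n : ℝ) : ℂ) = ((1:ℝ) : ℂ) := by push_cast; simpa using hh
    exact_mod_cast this
  have key' : coef f v = 2 ^ n * coef f v := key
  have hz : ((2:ℂ)^n - 1) * coef f v = 0 := by linear_combination -key'
  rcases mul_eq_zero.mp hz with h' | h'
  · exact absurd (sub_eq_zero.mp h') h2
  · exact h'

/-- Coefficients change sign under composition with a transposition
(using the signed permutation matrix of determinant 1). -/
lemma stepB (v : ⨂[ℂ] _ : Fin n, (Fin n → ℂ))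
    (h : ∀ T : (Fin n → ℂ) →ₗ[ℂ] (Fin n → ℂ), LinearMap.det T = 1 →
      PiTensorProduct.map (fun _ : Fin n => T) v = v)
    (a b : Fin n) (hab : a ≠ b) (σ : Equiv.Perm (Fin n)) :
    coef (fun k => Equiv.swap a b (σ k)) v = - coef (⇑σ) v := by
  set d : Fin n → ℂ := fun j => if j = a then -1 else 1 with hd
  set T := Matrix.toLin' ((Equiv.swap a b).permMatrix ℂ * Matrix.diagonal d) with hTdef
  have hdet : LinearMap.det T = 1 := by
    rw [hTdef, LinearMap.det_toLin', Matrix.det_mul, Matrix.det_permutation,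
      Matrix.det_diagonal, Equiv.Perm.sign_swap hab, hd]
    rw [Finset.prod_ite_eq' Finset.univ a (fun _ => (-1:ℂ))]
    simp
  have hT : ∀ j, T (Pi.single j 1) = d j • (Pi.single (Equiv.swap a b j) 1 : Fin n → ℂ) := by
    intro j
    rw [hTdef, Matrix.toLin'_apply, ← Matrix.mulVec_mulVec, Matrix.diagonal_mulVec_single,
      mul_one, Matrix.mulVec_single]
    funext r
    simp only [Equiv.Perm.permMatrix, PEquiv.toMatrix_apply, Equiv.toPEquiv_apply,
      Option.mem_def, Option.some.injEq, Pi.smul_apply, Pi.single_apply, smul_eq_mul,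
      Matrix.col_apply, op_smul_eq_mul]
    by_cases hr : r = Equiv.swap a b j
    · rw [if_pos, if_pos hr] <;> simp [hr]
    · rw [if_neg, if_neg hr]
      · ring
      · intro hc
        apply hr
        rw [← hc]
        simp
  have key := coef_map T d (Equiv.swap a b) hT v ⇑σ
  rw [h T hdet, Equiv.symm_swap] at key
  have hprod : ∏ k, d (Equiv.swap a b (σ k)) = -1 := by
    have h1 : ∀ k, d (Equiv.swap a b (σ k)) = if σ k = b then -1 else 1 := by
      intro k
      simp only [hd]
      by_cases hk : σ k = b
      · simp [hk]
      · rw [if_neg hk, if_neg]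
        intro hc
        apply hk
        have := congrArg (Equiv.swap a b) hc
        simpa using this
    simp_rw [h1]
    rw [Equiv.prod_comp σ (fun j => if j = b then (-1:ℂ) else 1),
      Finset.prod_ite_eq' Finset.univ b (fun _ => (-1:ℂ))]
    simp
  rw [hprod] at key
  linear_combination key

/-- Coefficients at permutations are the sign times the coefficient at the identity. -/
lemma stepC (v : ⨂[ℂ] _ : Fin n, (Fin n → ℂ))
    (h : ∀ T : (Fin n → ℂ) →ₗ[ℂ] (Fin n → ℂ), LinearMap.det T = 1 →
      PiTensorProduct.map (fun _ : Fin n => T) v = v)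
    (σ : Equiv.Perm (Fin n)) :
    coef ⇑σ v = ((Equiv.Perm.sign σ : ℤ) : ℂ) * coef ⇑(1 : Equiv.Perm (Fin n)) v := by
  refine Equiv.Perm.swap_induction_on σ (by simp) ?_
  intro π x y hxy ih
  have h0 : coef ⇑(Equiv.swap x y * π) v = coef (fun k => Equiv.swap x y (π k)) v := rfl
  rw [h0, stepB v h x y hxy π, ih, Equiv.Perm.sign_mul, Equiv.Perm.sign_swap hxy]
  push_cast
  ring

end Stmt6Aux

/-- Uniqueness: any tensor invariant under `T^{⊗n}` for all `T ∈ SL(n,ℂ)` is a scalar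
multiple of the antisymmetrization of the standard basis. -/
theorem stmt6 (n : ℕ) (hn : 1 ≤ n) (v : ⨂[ℂ] _ : Fin n, (Fin n → ℂ))
    (h : ∀ T : (Fin n → ℂ) →ₗ[ℂ] (Fin n → ℂ), LinearMap.det T = 1 →
      PiTensorProduct.map (fun _ : Fin n => T) v = v) :
    ∃ κ : ℂ, v = κ • antisym n (fun i => (Pi.single i 1 : Fin n → ℂ)) := by
  classical
  refine ⟨Stmt6Aux.coef ⇑(1 : Equiv.Perm (Fin n)) v, ?_⟩
  have hanti : antisym n (fun i => (Pi.single i 1 : Fin n → ℂ))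
      = ∑ σ : Equiv.Perm (Fin n), ((Equiv.Perm.sign σ : ℤ) : ℂ) • Stmt6Aux.bvec ⇑σ := rfl
  rw [hanti, Finset.smul_sum]
  conv_lhs => rw [Stmt6Aux.expand v]
  have hsub : ∑ f : Fin n → Fin n, Stmt6Aux.coef f v • Stmt6Aux.bvec f
      = ∑ f ∈ Finset.univ.image (fun σ : Equiv.Perm (Fin n) => ⇑σ),
          Stmt6Aux.coef f v • Stmt6Aux.bvec f := by
    symm
    apply Finset.sum_subset (Finset.subset_univ _)
    intro f _ hf
    have hnb : ¬ Function.Bijective f := by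
      intro hb
      exact hf (Finset.mem_image.mpr ⟨Equiv.ofBijective f hb, Finset.mem_univ _, rfl⟩)
    rw [Stmt6Aux.stepA hn v h f hnb, zero_smul]
  rw [hsub, Finset.sum_image (fun σ _ τ _ hst => Equiv.coe_fn_injective hst)]
  refine Finset.sum_congr rfl fun σ _ => ?_
  rw [Stmt6Aux.stepC v h σ, mul_comm, mul_smul]
end

section
/- Let V be a vector space over ℂ, let v₁,…,vₙ ∈ V be linearly independent, and let c : Sₙ → ℂ satisfy c_{id} = 1/n! and c_σ ∈ {1/n!, −1/n!} for every σ ∈ Sₙ. Set v = Σ_{σ ∈ Sₙ} c_σ · v_{σ(1)} ⊗ ⋯ ⊗ v_{σ(n)} ∈ V^{⊗n}. If v is invariant under every even permutation of the tensor factors (i.e., for every τ in the alternating group Aₙ, the linear map on V^{⊗n} that permutes tensor factors according to τ fixes v), then either c_σ = 1/n! for all σ (the Bose-Einstein statistic) or c_σ = sgn(σ)/n! for all σ (the Fermi-Dirac statistic). -/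
open scoped TensorProduct

/-- If `v = Σ_σ c_σ v_{σ(1)} ⊗ ⋯ ⊗ v_{σ(n)}` with `c_id = 1/n!`, each `c_σ = ±1/n!`,
the `vᵢ` linearly independent, and `v` invariant under every even permutation of the
tensor factors, then `v` is either the Bose-Einstein state (`c_σ = 1/n!` for all `σ`)
or the Fermi-Dirac state (`c_σ = sgn(σ)/n!` for all `σ`). -/
theorem stmt8 (V : Type*) [AddCommGroup V] [Module ℂ V] (n : ℕ)
    (v : Fin n → V) (hv : LinearIndependent ℂ v)
    (c : Equiv.Perm (Fin n) → ℂ)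
    (hcid : c 1 = 1 / (n.factorial : ℂ))
    (hc : ∀ σ : Equiv.Perm (Fin n),
      c σ = 1 / (n.factorial : ℂ) ∨ c σ = -(1 / (n.factorial : ℂ)))
    (hinv : ∀ τ : Equiv.Perm (Fin n), τ ∈ alternatingGroup (Fin n) →
      PiTensorProduct.reindex ℂ (fun _ : Fin n => V) τ
          (∑ σ : Equiv.Perm (Fin n),
            c σ • (PiTensorProduct.tprod ℂ fun k => v (σ k))) =
        ∑ σ : Equiv.Perm (Fin n),
          c σ • (PiTensorProduct.tprod ℂ fun k => v (σ k))) :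
    (∀ σ : Equiv.Perm (Fin n), c σ = 1 / (n.factorial : ℂ)) ∨
    (∀ σ : Equiv.Perm (Fin n),
      c σ = ((Equiv.Perm.sign σ : ℤ) : ℂ) / (n.factorial : ℂ)) := by
  classical
  -- dual family
  obtain ⟨q, hq⟩ := Submodule.exists_isCompl (Submodule.span ℂ (Set.range v))
  set p := Submodule.span ℂ (Set.range v) with hp
  let π : V →ₗ[ℂ] p := Submodule.linearProjOfIsCompl p q hq
  let f : Fin n → V →ₗ[ℂ] ℂ := fun i =>
    (Finsupp.lapply i) ∘ₗ (hv.repr : p →ₗ[ℂ] (Fin n →₀ ℂ)) ∘ₗ π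
  have hf : ∀ i j, f i (v j) = if j = i then 1 else 0 := by
    intro i j
    have hmem : v j ∈ p := Submodule.subset_span (Set.mem_range_self j)
    have hπ : π (v j) = ⟨v j, hmem⟩ :=
      Submodule.linearProjOfIsCompl_apply_left hq ⟨v j, hmem⟩
    have hrepr : hv.repr ⟨v j, hmem⟩ = Finsupp.single j 1 :=
      hv.repr_eq_single j _ rfl
    simp [f, hπ, hrepr, Finsupp.single_apply]
  -- coefficient extractor
  let φ : Equiv.Perm (Fin n) → (⨂[ℂ] _ : Fin n, V) →ₗ[ℂ] ℂ := fun ρ =>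
    PiTensorProduct.lift
      ((MultilinearMap.mkPiAlgebra ℂ (Fin n) ℂ).compLinearMap fun i => f (ρ i))
  have hφ : ∀ ρ π₀ : Equiv.Perm (Fin n),
      φ ρ (PiTensorProduct.tprod ℂ fun k => v (π₀ k)) =
        if π₀ = ρ then 1 else 0 := by
    intro ρ π₀
    have : φ ρ (PiTensorProduct.tprod ℂ fun k => v (π₀ k)) =
        ∏ i, f (ρ i) (v (π₀ i)) := by
      simp [φ, PiTensorProduct.lift.tprod]
    rw [this]
    by_cases h : π₀ = ρ
    · subst h
      simp [hf]
    · obtain ⟨i, hi⟩ : ∃ i, π₀ i ≠ ρ i := by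
        by_contra hcon
        push_neg at hcon
        exact h (Equiv.ext hcon)
      rw [if_neg h]
      apply Finset.prod_eq_zero (Finset.mem_univ i)
      rw [hf, if_neg hi]
  -- key invariance of c
  have hkey : ∀ τ ∈ alternatingGroup (Fin n), ∀ ρ : Equiv.Perm (Fin n),
      c (ρ * τ) = c ρ := by
    intro τ hτ ρ
    have h := congrArg (φ ρ) (hinv τ hτ)
    have hfun : ∀ σ : Equiv.Perm (Fin n),
        (PiTensorProduct.tprod ℂ fun i => v (σ (τ.symm i))) =
          PiTensorProduct.tprod ℂ fun i => v ((σ * τ⁻¹) i) := fun σ => rfl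
    rw [map_sum, map_sum] at h
    simp only [map_smul, PiTensorProduct.reindex_tprod, hfun, map_smul, hφ,
      smul_eq_mul, mul_ite, mul_one, mul_zero, mul_inv_eq_iff_eq_mul] at h
    simp only [map_sum, map_smul, hφ, smul_eq_mul, mul_ite, mul_one, mul_zero,
      Finset.sum_ite_eq', Finset.mem_univ, if_true] at h
    exact h
  have hfact : (n.factorial : ℂ) ≠ 0 := Nat.cast_ne_zero.mpr n.factorial_ne_zero
  have hne : (1 / (n.factorial : ℂ)) ≠ -(1 / (n.factorial : ℂ)) := by
    intro h
    have : (2 : ℂ) * (1 / (n.factorial : ℂ)) = 0 := by ring_nf; linear_combination h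
    field_simp at this
    norm_num at this
  by_cases hall : ∀ σ : Equiv.Perm (Fin n), c σ = 1 / (n.factorial : ℂ)
  · exact Or.inl hall
  · right
    push_neg at hall
    obtain ⟨σ₀, hσ₀⟩ := hall
    have hcσ₀ : c σ₀ = -(1 / (n.factorial : ℂ)) := (hc σ₀).resolve_left hσ₀
    have hsσ₀ : Equiv.Perm.sign σ₀ = -1 := by
      rcases Int.units_eq_one_or (Equiv.Perm.sign σ₀) with h1 | h1
      · exfalso
        have hmem : σ₀ ∈ alternatingGroup (Fin n) :=
          Equiv.Perm.mem_alternatingGroup.mpr h1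
        have := hkey σ₀ hmem 1
        rw [one_mul, hcid] at this
        exact hσ₀ (this.symm ▸ this)
      · exact h1
    intro σ
    rcases Int.units_eq_one_or (Equiv.Perm.sign σ) with h1 | h1
    · have hmem : σ ∈ alternatingGroup (Fin n) :=
        Equiv.Perm.mem_alternatingGroup.mpr h1
      have := hkey σ hmem 1
      rw [one_mul, hcid] at this
      rw [this, h1]
      norm_num
    · have hmem : σ₀⁻¹ * σ ∈ alternatingGroup (Fin n) := by
        rw [Equiv.Perm.mem_alternatingGroup, map_mul, map_inv, hsσ₀, h1]
        decide
      have := hkey _ hmem σ₀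
      rw [mul_inv_cancel_left] at this
      rw [this, hcσ₀, h1]
      push_cast
      ring
end

section
/- Let S be a 2×2 complex matrix with det S = 1 and set T = (Sᴴ)⁻¹. For x, y ∈ ℝ⁴ define the transformed fields X' = S·X(x)·Sᴴ, X*' = T·X*(x)·Tᴴ, Y' = S·X(y)·Sᴴ, Y*' = T·X*(y)·Tᴴ. Then the Pauli inner product is invariant under this SL(2,ℂ) action: (1/4)·(X'·Y*' + Y*'·X' + Y'·X*' + X*'·Y') = (1/4)·(X(x)·X*(y) + X*(y)·X(x) + X(y)·X*(x) + X*(x)·X(y)) = (x₀y₀ − x₁y₁ − x₂y₂ − x₃y₃)·I. -/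
open scoped Matrix

/-- The Majorana field `X(x)` of a 4-vector `x ∈ ℝ⁴`. -/
noncomputable def Xmat (x : Fin 4 → ℝ) : Matrix (Fin 2) (Fin 2) ℂ :=
  !![(x 0 : ℂ) - x 1, (x 2 : ℂ) + x 3 * Complex.I;
     (x 2 : ℂ) - x 3 * Complex.I, (x 0 : ℂ) + x 1]

/-- The conjugate field `X*(x)` of a 4-vector `x ∈ ℝ⁴`. -/
noncomputable def Xstar (x : Fin 4 → ℝ) : Matrix (Fin 2) (Fin 2) ℂ :=
  !![(x 0 : ℂ) + x 1, -(x 2 : ℂ) - x 3 * Complex.I;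
     -(x 2 : ℂ) + x 3 * Complex.I, (x 0 : ℂ) - x 1]


lemma key1 (x y : Fin 4 → ℝ) :
    Xmat x * Xstar y + Xmat y * Xstar x =
      (2 * ((x 0 : ℂ) * y 0 - (x 1 : ℂ) * y 1 - (x 2 : ℂ) * y 2 - (x 3 : ℂ) * y 3)) •
        (1 : Matrix (Fin 2) (Fin 2) ℂ) := by
  ext i j
  fin_cases i <;> fin_cases j <;>
    simp [Xmat, Xstar, Matrix.mul_apply, Fin.sum_univ_succ, Matrix.one_apply] <;> ring_nf <;>
    simp [Complex.I_sq] <;> ring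

lemma key2 (x y : Fin 4 → ℝ) :
    Xstar y * Xmat x + Xstar x * Xmat y =
      (2 * ((x 0 : ℂ) * y 0 - (x 1 : ℂ) * y 1 - (x 2 : ℂ) * y 2 - (x 3 : ℂ) * y 3)) •
        (1 : Matrix (Fin 2) (Fin 2) ℂ) := by
  ext i j
  fin_cases i <;> fin_cases j <;>
    simp [Xmat, Xstar, Matrix.mul_apply, Fin.sum_univ_succ, Matrix.one_apply] <;> ring_nf <;>
    simp [Complex.I_sq] <;> ring

/-- The Pauli inner product is invariant under the `SL(2,ℂ)` action `X ↦ S X Sᴴ`,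
`X* ↦ T X* Tᴴ` with `T = (Sᴴ)⁻¹`, and equals the Minkowski inner product times `I`. -/
theorem stmt13 (S : Matrix (Fin 2) (Fin 2) ℂ) (hS : S.det = 1)
    (T : Matrix (Fin 2) (Fin 2) ℂ) (hT : T = (Sᴴ)⁻¹) (x y : Fin 4 → ℝ)
    (X' : Matrix (Fin 2) (Fin 2) ℂ) (hX' : X' = S * Xmat x * Sᴴ)
    (Xs' : Matrix (Fin 2) (Fin 2) ℂ) (hXs' : Xs' = T * Xstar x * Tᴴ)
    (Y' : Matrix (Fin 2) (Fin 2) ℂ) (hY' : Y' = S * Xmat y * Sᴴ)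
    (Ys' : Matrix (Fin 2) (Fin 2) ℂ) (hYs' : Ys' = T * Xstar y * Tᴴ) :
    (1 / 4 : ℂ) • (X' * Ys' + Ys' * X' + Y' * Xs' + Xs' * Y') =
      (1 / 4 : ℂ) • (Xmat x * Xstar y + Xstar y * Xmat x + Xmat y * Xstar x + Xstar x * Xmat y) ∧
    (1 / 4 : ℂ) • (Xmat x * Xstar y + Xstar y * Xmat x + Xmat y * Xstar x + Xstar x * Xmat y) =
      ((x 0 : ℂ) * y 0 - (x 1 : ℂ) * y 1 - (x 2 : ℂ) * y 2 - (x 3 : ℂ) * y 3) •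
        (1 : Matrix (Fin 2) (Fin 2) ℂ) := by

  have hdet : IsUnit S.det := by simp [hS]
  have hdetH : IsUnit Sᴴ.det := by
    simpa using hdet.map (starRingEnd ℂ)
  have hTH : Tᴴ = S⁻¹ := by
    rw [hT, ← Matrix.conjTranspose_nonsing_inv, Matrix.conjTranspose_conjTranspose]
  have hSH : Sᴴ * T = 1 := by rw [hT]; exact Matrix.mul_nonsing_inv _ hdetH
  have hTS : Tᴴ * S = 1 := by rw [hTH]; exact Matrix.nonsing_inv_mul _ hdet
  set c := (2 * ((x 0 : ℂ) * y 0 - (x 1 : ℂ) * y 1 - (x 2 : ℂ) * y 2 - (x 3 : ℂ) * y 3)) with hc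
  have h1 := key1 x y
  have h2 := key2 x y
  have hA : X' * Ys' + Y' * Xs' = c • 1 := by
    have e1 : X' * Ys' = S * (Xmat x * Xstar y) * Tᴴ := by
      rw [hX', hYs']
      calc S * Xmat x * Sᴴ * (T * Xstar y * Tᴴ)
          = S * Xmat x * (Sᴴ * T) * Xstar y * Tᴴ := by
            simp only [Matrix.mul_assoc]
        _ = S * (Xmat x * Xstar y) * Tᴴ := by
            rw [hSH]; simp only [Matrix.mul_assoc, Matrix.mul_one, Matrix.one_mul]
    have e2 : Y' * Xs' = S * (Xmat y * Xstar x) * Tᴴ := by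
      rw [hY', hXs']
      calc S * Xmat y * Sᴴ * (T * Xstar x * Tᴴ)
          = S * Xmat y * (Sᴴ * T) * Xstar x * Tᴴ := by
            simp only [Matrix.mul_assoc]
        _ = S * (Xmat y * Xstar x) * Tᴴ := by
            rw [hSH]; simp only [Matrix.mul_assoc, Matrix.mul_one, Matrix.one_mul]
    rw [e1, e2, ← Matrix.add_mul, ← Matrix.mul_add, h1, Matrix.mul_smul, Matrix.smul_mul,
      Matrix.mul_one, hTH, Matrix.mul_nonsing_inv _ hdet]
  have hB : Ys' * X' + Xs' * Y' = c • 1 := by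
    have e1 : Ys' * X' = T * (Xstar y * Xmat x) * Sᴴ := by
      rw [hX', hYs']
      calc T * Xstar y * Tᴴ * (S * Xmat x * Sᴴ)
          = T * Xstar y * (Tᴴ * S) * Xmat x * Sᴴ := by
            simp only [Matrix.mul_assoc]
        _ = T * (Xstar y * Xmat x) * Sᴴ := by
            rw [hTS]; simp only [Matrix.mul_assoc, Matrix.mul_one, Matrix.one_mul]
    have e2 : Xs' * Y' = T * (Xstar x * Xmat y) * Sᴴ := by
      rw [hY', hXs']
      calc T * Xstar x * Tᴴ * (S * Xmat y * Sᴴ)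
          = T * Xstar x * (Tᴴ * S) * Xmat y * Sᴴ := by
            simp only [Matrix.mul_assoc]
        _ = T * (Xstar x * Xmat y) * Sᴴ := by
            rw [hTS]; simp only [Matrix.mul_assoc, Matrix.mul_one, Matrix.one_mul]
    rw [e1, e2, ← Matrix.add_mul, ← Matrix.mul_add, h2, Matrix.mul_smul, Matrix.smul_mul,
      Matrix.mul_one, hT, Matrix.nonsing_inv_mul _ hdetH]
  constructor
  · have lhs : X' * Ys' + Ys' * X' + Y' * Xs' + Xs' * Y' = c • 1 + c • 1 := by
      rw [show X' * Ys' + Ys' * X' + Y' * Xs' + Xs' * Y'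
          = (X' * Ys' + Y' * Xs') + (Ys' * X' + Xs' * Y') from by abel, hA, hB]
    have rhs : Xmat x * Xstar y + Xstar y * Xmat x + Xmat y * Xstar x + Xstar x * Xmat y
        = c • 1 + c • 1 := by
      rw [show Xmat x * Xstar y + Xstar y * Xmat x + Xmat y * Xstar x + Xstar x * Xmat y
          = (Xmat x * Xstar y + Xmat y * Xstar x) + (Xstar y * Xmat x + Xstar x * Xmat y)
          from by abel, h1, h2]
    rw [lhs, rhs]
  · have rhs : Xmat x * Xstar y + Xstar y * Xmat x + Xmat y * Xstar x + Xstar x * Xmat y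
        = c • 1 + c • 1 := by
      rw [show Xmat x * Xstar y + Xstar y * Xmat x + Xmat y * Xstar x + Xstar x * Xmat y
          = (Xmat x * Xstar y + Xmat y * Xstar x) + (Xstar y * Xmat x + Xstar x * Xmat y)
          from by abel, h1, h2]
    rw [rhs, smul_add, ← add_smul, smul_smul, hc]
    congr 1
    ring
end
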